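/- Fix α, β ∈ ℝ\{0\}, μ > 0 with Δ = α²+β²−4μ² > 0, and real y1, y2 (affine functions of (t,x) with unit x-slope). Define f(x) = cosh(βy2) − (2βμ/(α√(α²+β²)√Δ))(α cos(αy1) − β sin(αy1)) and g(x) = (β√(α²+β²)/(α√Δ)) sin(αy1) − (2βμ/Δ)e^{βy2}, and set B = 2(g_x f − f_x g)/(f² + g²). Then B satisfies the pointwise identity B² = ∂_x² log(f² + g²) − 2μB. -/

import Mathlib

/-- The denominator profile `F_μ` of the 5th-order Gardner breather at fixed time,
with `y1 = x + c1`, `y2 = x + c2`. -/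
noncomputable def breatherF (α β μ c1 c2 : ℝ) (x : ℝ) : ℝ :=
  Real.cosh (β * (x + c2))
    - (2 * β * μ / (α * Real.sqrt (α^2 + β^2) * Real.sqrt (α^2 + β^2 - 4*μ^2)))
      * (α * Real.cos (α * (x + c1)) - β * Real.sin (α * (x + c1)))

/-- The numerator profile `G_μ` of the 5th-order Gardner breather at fixed time. -/
noncomputable def breatherG (α β μ c1 c2 : ℝ) (x : ℝ) : ℝ :=
  (β * Real.sqrt (α^2 + β^2) / (α * Real.sqrt (α^2 + β^2 - 4*μ^2)))
      * Real.sin (α * (x + c1))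
    - (2 * β * μ / (α^2 + β^2 - 4*μ^2)) * Real.exp (β * (x + c2))

/-- The breather profile `B = 2 (g_x f - f_x g)/(f² + g²)`. -/
noncomputable def breatherB (α β μ c1 c2 : ℝ) (x : ℝ) : ℝ :=
  2 * (deriv (breatherG α β μ c1 c2) x * breatherF α β μ c1 c2 x
        - deriv (breatherF α β μ c1 c2) x * breatherG α β μ c1 c2 x)
    / ((breatherF α β μ c1 c2 x)^2 + (breatherG α β μ c1 c2 x)^2)


noncomputable def fD (α β μ c1 c2 : ℝ) (x : ℝ) : ℝ :=
  β * Real.sinh (β * (x + c2))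
    + (2 * β * μ / (α * Real.sqrt (α^2 + β^2) * Real.sqrt (α^2 + β^2 - 4*μ^2)))
      * (α^2 * Real.sin (α * (x + c1)) + α * β * Real.cos (α * (x + c1)))

noncomputable def fDD (α β μ c1 c2 : ℝ) (x : ℝ) : ℝ :=
  β^2 * Real.cosh (β * (x + c2))
    + (2 * β * μ / (α * Real.sqrt (α^2 + β^2) * Real.sqrt (α^2 + β^2 - 4*μ^2)))
      * (α^3 * Real.cos (α * (x + c1)) - α^2 * β * Real.sin (α * (x + c1)))

noncomputable def gD (α β μ c1 c2 : ℝ) (x : ℝ) : ℝ :=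
  (β * Real.sqrt (α^2 + β^2) / Real.sqrt (α^2 + β^2 - 4*μ^2))
      * Real.cos (α * (x + c1))
    - (2 * β^2 * μ / (α^2 + β^2 - 4*μ^2)) * Real.exp (β * (x + c2))

noncomputable def gDD (α β μ c1 c2 : ℝ) (x : ℝ) : ℝ :=
  -(α * β * Real.sqrt (α^2 + β^2) / Real.sqrt (α^2 + β^2 - 4*μ^2))
      * Real.sin (α * (x + c1))
    - (2 * β^3 * μ / (α^2 + β^2 - 4*μ^2)) * Real.exp (β * (x + c2))

lemma hasDerivAt_y (a c x : ℝ) : HasDerivAt (fun y => a * (y + c)) a x := by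
  simpa using ((hasDerivAt_id x).add_const c).const_mul a

lemma hasDerivAt_breatherF (α β μ c1 c2 x : ℝ) :
    HasDerivAt (breatherF α β μ c1 c2) (fD α β μ c1 c2 x) x := by
  unfold breatherF fD
  have h2 := (Real.hasDerivAt_cosh (β * (x + c2))).comp x (hasDerivAt_y β c2 x)
  have h3 := (Real.hasDerivAt_cos (α * (x + c1))).comp x (hasDerivAt_y α c1 x)
  have h4 := (Real.hasDerivAt_sin (α * (x + c1))).comp x (hasDerivAt_y α c1 x)
  have := h2.sub ((((h3.const_mul α).sub (h4.const_mul β)).const_mul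
    (2 * β * μ / (α * Real.sqrt (α^2 + β^2) * Real.sqrt (α^2 + β^2 - 4*μ^2)))))
  refine this.congr_deriv ?_
  ring

lemma hasDerivAt_fD (α β μ c1 c2 x : ℝ) :
    HasDerivAt (fD α β μ c1 c2) (fDD α β μ c1 c2 x) x := by
  unfold fD fDD
  have h2 := (Real.hasDerivAt_sinh (β * (x + c2))).comp x (hasDerivAt_y β c2 x)
  have h3 := (Real.hasDerivAt_cos (α * (x + c1))).comp x (hasDerivAt_y α c1 x)
  have h4 := (Real.hasDerivAt_sin (α * (x + c1))).comp x (hasDerivAt_y α c1 x)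
  have := (h2.const_mul β).add ((((h4.const_mul (α^2)).add (h3.const_mul (α*β))).const_mul
    (2 * β * μ / (α * Real.sqrt (α^2 + β^2) * Real.sqrt (α^2 + β^2 - 4*μ^2)))))
  refine this.congr_deriv ?_
  ring

lemma hasDerivAt_breatherG (α β μ c1 c2 x : ℝ) (hα : α ≠ 0) :
    HasDerivAt (breatherG α β μ c1 c2) (gD α β μ c1 c2 x) x := by
  unfold breatherG gD
  have h4 := (Real.hasDerivAt_sin (α * (x + c1))).comp x (hasDerivAt_y α c1 x)
  have h5 := (Real.hasDerivAt_exp (β * (x + c2))).comp x (hasDerivAt_y β c2 x)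
  have := (h4.const_mul (β * Real.sqrt (α^2 + β^2) / (α * Real.sqrt (α^2 + β^2 - 4*μ^2)))).sub
    (h5.const_mul (2 * β * μ / (α^2 + β^2 - 4*μ^2)))
  refine this.congr_deriv ?_
  field_simp

lemma hasDerivAt_gD (α β μ c1 c2 x : ℝ) (hα : α ≠ 0) :
    HasDerivAt (gD α β μ c1 c2) (gDD α β μ c1 c2 x) x := by
  unfold gD gDD
  have h3 := (Real.hasDerivAt_cos (α * (x + c1))).comp x (hasDerivAt_y α c1 x)
  have h5 := (Real.hasDerivAt_exp (β * (x + c2))).comp x (hasDerivAt_y β c2 x)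
  have := (h3.const_mul (β * Real.sqrt (α^2 + β^2) / Real.sqrt (α^2 + β^2 - 4*μ^2))).sub
    (h5.const_mul (2 * β^2 * μ / (α^2 + β^2 - 4*μ^2)))
  refine this.congr_deriv ?_
  ring

set_option maxHeartbeats 1000000 in
lemma key_alg (a b m C Sn E Ei S T : ℝ) (ha : a ≠ 0)
    (hS0 : S ≠ 0) (hT0 : T ≠ 0)
    (hS : S^2 = a^2+b^2) (hT : T^2 = a^2+b^2-4*m^2) (hE : E*Ei = 1) (hC : Sn^2+C^2 = 1) :
    ((E+Ei)/2 - (2*b*m/(a*S*T))*(a*C-b*Sn)) * (b^2*(E+Ei)/2 + (2*b*m/(a*S*T))*(a^3*C-a^2*b*Sn))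
    + ((b*S/(a*T))*Sn - (2*b*m/(a^2+b^2-4*m^2))*E) * (-(a*b*S/T)*Sn - (2*b^3*m/(a^2+b^2-4*m^2))*E)
    - (b*(E-Ei)/2 + (2*b*m/(a*S*T))*(a^2*Sn+a*b*C))^2
    - ((b*S/T)*C - (2*b^2*m/(a^2+b^2-4*m^2))*E)^2
    = 2*m*( ((b*S/T)*C - (2*b^2*m/(a^2+b^2-4*m^2))*E) * ((E+Ei)/2 - (2*b*m/(a*S*T))*(a*C-b*Sn))
          - (b*(E-Ei)/2 + (2*b*m/(a*S*T))*(a^2*Sn+a*b*C)) * ((b*S/(a*T))*Sn - (2*b*m/(a^2+b^2-4*m^2))*E) ) := by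
  rw [← hT]
  have hA : a * a⁻¹ = 1 := mul_inv_cancel₀ ha
  have hSi : S * S⁻¹ = 1 := mul_inv_cancel₀ hS0
  have hTi : T * T⁻¹ = 1 := mul_inv_cancel₀ hT0
  have hM : a^2*S^2*T^4 ≠ 0 :=
    mul_ne_zero (mul_ne_zero (pow_ne_zero 2 ha) (pow_ne_zero 2 hS0)) (pow_ne_zero 4 hT0)
  refine mul_right_cancel₀ hM ?_
  linear_combination ((-1)*a*b^2*m*Sn*Ei*S^3*T^4*T⁻¹ + (1)*a*b^2*m*Sn*E*S^3*T^4*T⁻¹ + (1)*a*b^4*m*Sn*Ei*S^2*S⁻¹*T^4*T⁻¹ + (1)*a*b^4*m*Sn*E*S^2*S⁻¹*T^4*T⁻¹ + (-2)*a*b^4*m*Sn*E*S^3*T^4*T⁻¹^3 + (8)*a*b^4*m^3*Sn*E*S^2*S⁻¹*T^4*T⁻¹^3 + (-1)*a^2*b^2*Sn^2*S^4*T^4*T⁻¹^2 + (4)*a^2*b^2*m^2*Sn^2*S^3*S⁻¹*T^4*T⁻¹^2 + (4)*a^2*b^2*m^2*C^2*S^3*S⁻¹*T^4*T⁻¹^2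 + (1)*a^2*b^3*m*C*Ei*S^2*S⁻¹*T^4*T⁻¹ + (-3)*a^2*b^3*m*C*E*S^2*S⁻¹*T^4*T⁻¹ + (-16)*a^2*b^3*m^3*C*E*S^2*S⁻¹*T^4*T⁻¹^3 + (-4)*a^2*b^4*m^2*Sn^2*S^2*S⁻¹^2*T^4*T⁻¹^2 + (-4)*a^2*b^4*m^2*C^2*S^2*S⁻¹^2*T^4*T⁻¹^2 + (4)*a^2*a⁻¹*b^3*m^2*C*Sn*S^3*S⁻¹*T^4*T⁻¹^2 + (1)*a^3*b^2*m*Sn*Ei*S^2*S⁻¹*T^4*T⁻¹ + (-3)*a^3*b^2*m*Sn*E*S^2*S⁻¹*T^4*T⁻¹ + (-8)*a^3*b^2*m^3*Sn*E*S^2*S⁻¹*T^4*T⁻¹^3 + (4)*a^3*a⁻¹*b^2*m^2*Sn^2*S^3*S⁻¹*T^4*T⁻¹^2 + (-4)*a^3*a⁻¹*b^4*m^2*Sn^2*S^2*S⁻¹^2*T^4*T⁻¹^2 + (-4)*a^3*a⁻¹*b^4*m^2*C^2*S^2*S⁻¹^2*T^4*T⁻¹^2 + (1)*a^4*b*m*C*Ei*S^2*S⁻¹*T^4*T⁻¹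 + (1)*a^4*b*m*C*E*S^2*S⁻¹*T^4*T⁻¹ + (-4)*a^4*b^2*m^2*Sn^2*S^2*S⁻¹^2*T^4*T⁻¹^2 + (-4)*a^4*b^2*m^2*C^2*S^2*S⁻¹^2*T^4*T⁻¹^2 + (-4)*a^5*a⁻¹*b^2*m^2*Sn^2*S^2*S⁻¹^2*T^4*T⁻¹^2 + (-4)*a^5*a⁻¹*b^2*m^2*C^2*S^2*S⁻¹^2*T^4*T⁻¹^2) * hA
      + ((1)*a*b^4*m*Sn*Ei*S*T^4*T⁻¹ + (1)*a*b^4*m*Sn*E*S*T^4*T⁻¹ + (8)*a*b^4*m^3*Sn*E*S*T^4*T⁻¹^3 + (4)*a^2*b^2*m^2*Sn^2*S^2*T^4*T⁻¹^2 + (4)*a^2*b^2*m^2*C^2*S^2*T^4*T⁻¹^2 + (1)*a^2*b^3*m*C*Ei*S*T^4*T⁻¹ + (-3)*a^2*b^3*m*C*E*S*T^4*T⁻¹ + (-16)*a^2*b^3*m^3*C*E*S*T^4*T⁻¹^3 + (-4)*a^2*b^4*m^2*Sn^2*T^4*T⁻¹^2 + (-4)*a^2*b^4*m^2*Sn^2*S*S⁻¹*T^4*T⁻¹^2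 + (-4)*a^2*b^4*m^2*C^2*T^4*T⁻¹^2 + (-4)*a^2*b^4*m^2*C^2*S*S⁻¹*T^4*T⁻¹^2 + (1)*a^3*b^2*m*Sn*Ei*S*T^4*T⁻¹ + (-3)*a^3*b^2*m*Sn*E*S*T^4*T⁻¹ + (-8)*a^3*b^2*m^3*Sn*E*S*T^4*T⁻¹^3 + (1)*a^4*b*m*C*Ei*S*T^4*T⁻¹ + (1)*a^4*b*m*C*E*S*T^4*T⁻¹ + (-4)*a^4*b^2*m^2*Sn^2*T^4*T⁻¹^2 + (-4)*a^4*b^2*m^2*Sn^2*S*S⁻¹*T^4*T⁻¹^2 + (-4)*a^4*b^2*m^2*C^2*T^4*T⁻¹^2 + (-4)*a^4*b^2*m^2*C^2*S*S⁻¹*T^4*T⁻¹^2) * hSi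
      + ((-1)*a*b^2*m*Sn*Ei*S^3*T^3 + (1)*a*b^2*m*Sn*E*S^3*T^3 + (1)*a*b^4*m*Sn*Ei*S*T^3 + (1)*a*b^4*m*Sn*E*S*T^3 + (-2)*a*b^4*m*Sn*E*S^3*T + (-2)*a*b^4*m*Sn*E*S^3*T^2*T⁻¹ + (-2)*a*b^4*m*Sn*E*S^3*T^3*T⁻¹^2 + (8)*a*b^4*m^3*Sn*E*S*T + (8)*a*b^4*m^3*Sn*E*S*T^2*T⁻¹ + (8)*a*b^4*m^3*Sn*E*S*T^3*T⁻¹^2 + (-1)*a^2*b*m*C*Ei*S^3*T^3 + (-1)*a^2*b*m*C*E*S^3*T^3 + (-1)*a^2*b^2*Sn^2*S^4*T^2 + (-1)*a^2*b^2*Sn^2*S^4*T^3*T⁻¹ + (-1)*a^2*b^2*C^2*S^4*T^2 + (-1)*a^2*b^2*C^2*S^4*T^3*T⁻¹ + (4)*a^2*b^2*m^2*E*Ei*S^2*T^2 + (4)*a^2*b^2*m^2*E*Ei*S^2*T^3*T⁻¹ + (4)*a^2*b^2*m^2*Sn^2*S^2*T^2 + (4)*a^2*b^2*m^2*Sn^2*S^2*T^3*T⁻¹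 + (4)*a^2*b^2*m^2*C^2*S^2*T^2 + (4)*a^2*b^2*m^2*C^2*S^2*T^3*T⁻¹ + (1)*a^2*b^3*m*C*Ei*S*T^3 + (-3)*a^2*b^3*m*C*E*S*T^3 + (4)*a^2*b^3*m*C*E*S^3*T + (4)*a^2*b^3*m*C*E*S^3*T^2*T⁻¹ + (4)*a^2*b^3*m*C*E*S^3*T^3*T⁻¹^2 + (-16)*a^2*b^3*m^3*C*E*S*T + (-16)*a^2*b^3*m^3*C*E*S*T^2*T⁻¹ + (-16)*a^2*b^3*m^3*C*E*S*T^3*T⁻¹^2 + (-4)*a^2*b^4*m^2*Sn^2*T^2 + (-4)*a^2*b^4*m^2*Sn^2*T^3*T⁻¹ + (-4)*a^2*b^4*m^2*C^2*T^2 + (-4)*a^2*b^4*m^2*C^2*T^3*T⁻¹ + (1)*a^3*b^2*m*Sn*Ei*S*T^3 + (-3)*a^3*b^2*m*Sn*E*S*T^3 + (2)*a^3*b^2*m*Sn*E*S^3*T + (2)*a^3*b^2*m*Sn*E*S^3*T^2*T⁻¹ + (2)*a^3*b^2*m*Sn*E*S^3*T^3*T⁻¹^2 + (-8)*a^3*b^2*m^3*Sn*E*S*T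 + (-8)*a^3*b^2*m^3*Sn*E*S*T^2*T⁻¹ + (-8)*a^3*b^2*m^3*Sn*E*S*T^3*T⁻¹^2 + (1)*a^4*b*m*C*Ei*S*T^3 + (1)*a^4*b*m*C*E*S*T^3 + (-4)*a^4*b^2*m^2*Sn^2*T^2 + (-4)*a^4*b^2*m^2*Sn^2*T^3*T⁻¹ + (-4)*a^4*b^2*m^2*C^2*T^2 + (-4)*a^4*b^2*m^2*C^2*T^3*T⁻¹) * hTi
      + ((1)*a^2*b^2*S^2*T^4 + (4)*a^2*b^2*m^2*S^2*T^2) * hE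
      + ((-1)*a^2*b^2*S^4*T^2 + (4)*a^2*b^2*m^2*S^2*T^2 + (-4)*a^2*b^4*m^2*T^2 + (-4)*a^4*b^2*m^2*T^2) * hC
      + ((-1)*a*b^2*m*Sn*Ei*S*T^3 + (1)*a*b^2*m*Sn*E*S*T^3 + (-2)*a*b^4*m*Sn*E*S*T + (-1)*a^2*b*m*C*Ei*S*T^3 + (-1)*a^2*b*m*C*E*S*T^3 + (1)*a^2*b^2*T^4 + (-1)*a^2*b^2*S^2*T^2 + (8)*a^2*b^2*m^2*T^2 + (4)*a^2*b^3*m*C*E*S*T + (-1)*a^2*b^4*T^2 + (2)*a^3*b^2*m*Sn*E*S*T + (-1)*a^4*b^2*T^2) * hS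
      + ((2)*a*b^4*m*Sn*E*S*T + (-4)*a^2*b^3*m*C*E*S*T + (1)*a^2*b^4*T^2 + (-2)*a^3*b^2*m*Sn*E*S*T + (1)*a^4*b^2*T^2) * hT

lemma alg1 (f g fp gp fpp gpp m : ℝ) (hD : 0 < f^2+g^2)
    (hkey : f*fpp + g*gpp - fp^2 - gp^2 = 2*m*(gp*f - fp*g)) :
    (2*(gp*f - fp*g)/(f^2+g^2))^2 =
      ((2*(fp*fp + f*fpp) + 2*(gp*gp + g*gpp)) * (f^2+g^2)
         - (2*(f*fp) + 2*(g*gp)) * (2*(f*fp) + 2*(g*gp))) / (f^2+g^2)^2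
       - 2*m*(2*(gp*f - fp*g)/(f^2+g^2)) := by
  have h0 : f^2+g^2 ≠ 0 := hD.ne'
  have hDi : (f^2+g^2)*(f^2+g^2)⁻¹ = 1 := mul_inv_cancel₀ h0
  have hDi2 : (f^2+g^2)^2*((f^2+g^2)^2)⁻¹ = 1 := mul_inv_cancel₀ (pow_ne_zero 2 h0)
  refine mul_right_cancel₀ (pow_ne_zero 2 h0) ?_
  linear_combination (-2*(f^2+g^2)) * hkey
    + (4*(gp*f-fp*g)^2 * ((f^2+g^2)*(f^2+g^2)⁻¹ + 1) + 4*m*(gp*f-fp*g)*(f^2+g^2)) * hDi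
    - ((2*(fp*fp+f*fpp)+2*(gp*gp+g*gpp))*(f^2+g^2) - (2*(f*fp)+2*(g*gp))^2) * hDi2

theorem matsuno_identity (α β μ c1 c2 : ℝ) (hα : α ≠ 0) (hβ : β ≠ 0) (hμ : 0 < μ)
    (hΔ : 0 < α^2 + β^2 - 4*μ^2)
    (hpos : ∀ x, 0 < (breatherF α β μ c1 c2 x)^2 + (breatherG α β μ c1 c2 x)^2) :
    ∀ x : ℝ,
      (breatherB α β μ c1 c2 x)^2
        = deriv (deriv (fun y =>
            Real.log ((breatherF α β μ c1 c2 y)^2 + (breatherG α β μ c1 c2 y)^2))) x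
          - 2 * μ * breatherB α β μ c1 c2 x := by
  intro x
  have hdFeq : deriv (breatherF α β μ c1 c2) = fD α β μ c1 c2 :=
    funext fun y => (hasDerivAt_breatherF α β μ c1 c2 y).deriv
  have hdGeq : deriv (breatherG α β μ c1 c2) = gD α β μ c1 c2 :=
    funext fun y => (hasDerivAt_breatherG α β μ c1 c2 y hα).deriv
  have hDy : ∀ y, HasDerivAt
      (fun z => (breatherF α β μ c1 c2 z)^2 + (breatherG α β μ c1 c2 z)^2)
      (2*(breatherF α β μ c1 c2 y * fD α β μ c1 c2 y)
        + 2*(breatherG α β μ c1 c2 y * gD α β μ c1 c2 y)) y := by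
    intro y
    have := ((hasDerivAt_breatherF α β μ c1 c2 y).pow 2).add
      ((hasDerivAt_breatherG α β μ c1 c2 y hα).pow 2)
    refine this.congr_deriv ?_
    push_cast
    try ring
  have hlog : deriv (fun y =>
      Real.log ((breatherF α β μ c1 c2 y)^2 + (breatherG α β μ c1 c2 y)^2))
      = fun y => (2*(breatherF α β μ c1 c2 y * fD α β μ c1 c2 y)
        + 2*(breatherG α β μ c1 c2 y * gD α β μ c1 c2 y))
        / ((breatherF α β μ c1 c2 y)^2 + (breatherG α β μ c1 c2 y)^2) :=
    funext fun y => ((hDy y).log (hpos y).ne').deriv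
  have hN : HasDerivAt (fun y => 2*(breatherF α β μ c1 c2 y * fD α β μ c1 c2 y)
        + 2*(breatherG α β μ c1 c2 y * gD α β μ c1 c2 y))
      (2*(fD α β μ c1 c2 x * fD α β μ c1 c2 x + breatherF α β μ c1 c2 x * fDD α β μ c1 c2 x)
        + 2*(gD α β μ c1 c2 x * gD α β μ c1 c2 x + breatherG α β μ c1 c2 x * gDD α β μ c1 c2 x)) x := by
    have h1 := ((hasDerivAt_breatherF α β μ c1 c2 x).mul (hasDerivAt_fD α β μ c1 c2 x)).const_mul (2:ℝ)
    have h2 := ((hasDerivAt_breatherG α β μ c1 c2 x hα).mul (hasDerivAt_gD α β μ c1 c2 x hα)).const_mul (2:ℝ)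
    refine (h1.add h2).congr_deriv ?_
    try ring
  have hdd : deriv (deriv (fun y =>
      Real.log ((breatherF α β μ c1 c2 y)^2 + (breatherG α β μ c1 c2 y)^2))) x
      = ((2*(fD α β μ c1 c2 x * fD α β μ c1 c2 x + breatherF α β μ c1 c2 x * fDD α β μ c1 c2 x)
        + 2*(gD α β μ c1 c2 x * gD α β μ c1 c2 x + breatherG α β μ c1 c2 x * gDD α β μ c1 c2 x))
          * ((breatherF α β μ c1 c2 x)^2 + (breatherG α β μ c1 c2 x)^2)
        - (2*(breatherF α β μ c1 c2 x * fD α β μ c1 c2 x)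
            + 2*(breatherG α β μ c1 c2 x * gD α β μ c1 c2 x))
          * (2*(breatherF α β μ c1 c2 x * fD α β μ c1 c2 x)
            + 2*(breatherG α β μ c1 c2 x * gD α β μ c1 c2 x)))
        / ((breatherF α β μ c1 c2 x)^2 + (breatherG α β μ c1 c2 x)^2)^2 := by
    rw [hlog]
    exact (hN.div (hDy x) (hpos x).ne').deriv
  have hS0 : Real.sqrt (α^2+β^2) ≠ 0 := by
    have : (0:ℝ) < α^2+β^2 := by positivity
    exact (Real.sqrt_pos.mpr this).ne'
  have hT0 : Real.sqrt (α^2+β^2-4*μ^2) ≠ 0 := (Real.sqrt_pos.mpr hΔ).ne'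
  have hS2 : (Real.sqrt (α^2+β^2))^2 = α^2+β^2 := Real.sq_sqrt (by positivity)
  have hT2 : (Real.sqrt (α^2+β^2-4*μ^2))^2 = α^2+β^2-4*μ^2 := Real.sq_sqrt hΔ.le
  have hE : Real.exp (β*(x+c2)) * Real.exp (-(β*(x+c2))) = 1 := by
    rw [← Real.exp_add]; simp
  have hC : (Real.sin (α*(x+c1)))^2 + (Real.cos (α*(x+c1)))^2 = 1 := Real.sin_sq_add_cos_sq _
  have hkey : breatherF α β μ c1 c2 x * fDD α β μ c1 c2 x
      + breatherG α β μ c1 c2 x * gDD α β μ c1 c2 x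
      - (fD α β μ c1 c2 x)^2 - (gD α β μ c1 c2 x)^2
      = 2*μ*(gD α β μ c1 c2 x * breatherF α β μ c1 c2 x
              - fD α β μ c1 c2 x * breatherG α β μ c1 c2 x) := by
    have H := key_alg α β μ (Real.cos (α*(x+c1))) (Real.sin (α*(x+c1)))
      (Real.exp (β*(x+c2))) (Real.exp (-(β*(x+c2))))
      (Real.sqrt (α^2+β^2)) (Real.sqrt (α^2+β^2-4*μ^2))
      hα hS0 hT0 hS2 hT2 hE hC
    simp only [breatherF, breatherG, fD, fDD, gD, gDD]
    rw [Real.cosh_eq, Real.sinh_eq]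
    linear_combination H
  rw [hdd]
  simp only [breatherB, hdFeq, hdGeq]
  have := alg1 (breatherF α β μ c1 c2 x) (breatherG α β μ c1 c2 x)
    (fD α β μ c1 c2 x) (gD α β μ c1 c2 x) (fDD α β μ c1 c2 x) (gDD α β μ c1 c2 x) μ
    (hpos x) hkey
  linear_combination this
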